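/- For the factorial sequence of any subset S of the valuation ring R of a local field, defined greedily by s_n minimizing val(Π_{j<n}(s − s_j)) over s ∈ S, the value n!_S := val(Π_{j<n}(s_n − s_j)) is independent of the greedy choices made. -/

import Mathlib

open Finset Polynomial

section BhargavaAux

variable {R : Type*} [CommRing R] [IsDomain R] [IsDiscreteValuationRing R]

private lemma addVal_finset_prod {ι : Type*} (t : Finset ι) (f : ι → R) :
    IsDiscreteValuationRing.addVal R (∏ i ∈ t, f i)
      = ∑ i ∈ t, IsDiscreteValuationRing.addVal R (f i) := by
  classical
  induction t using Finset.induction_on with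
  | empty => simp
  | @insert a t ha ih =>
      rw [Finset.prod_insert ha, Finset.sum_insert ha, IsDiscreteValuationRing.addVal_mul, ih]

/-- The key determinant inequality: for a greedy sequence `s` in `S`, the valuation of the
Vandermonde product of any `(n+1)`-tuple of elements of `S` is at least the sum of the
greedy factorial valuations. -/
private lemma bhargava_key (S : Set R) (s : ℕ → R)
    (hgreedy : ∀ n, ∀ t ∈ S,
      IsDiscreteValuationRing.addVal R (∏ j ∈ Finset.range n, (s n - s j)) ≤
        IsDiscreteValuationRing.addVal R (∏ j ∈ Finset.range n, (t - s j)))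
    (n : ℕ) (x : Fin (n + 1) → R) (hx : ∀ i, x i ∈ S) :
    ∑ k ∈ range (n + 1),
        IsDiscreteValuationRing.addVal R (∏ j ∈ range k, (s k - s j)) ≤
      IsDiscreteValuationRing.addVal R (∏ i : Fin (n + 1), ∏ j ∈ Ioi i, (x j - x i)) := by
  classical
  have hdet : (∏ i : Fin (n + 1), ∏ j ∈ Ioi i, (x j - x i))
      = (Matrix.of fun i k : Fin (n + 1) =>
          (∏ j ∈ range (k : ℕ), (X - C (s j))).eval (x i)).det := by
    rw [← Matrix.det_vandermonde,
      Matrix.det_eval_matrixOfPolynomials_eq_det_vandermonde x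
        (fun k : Fin (n + 1) => ∏ j ∈ range (k : ℕ), (X - C (s j)))
        (fun k => by
          rw [natDegree_prod _ _ (fun j _ => X_sub_C_ne_zero (s j))]
          simp)
        (fun k => monic_prod_of_monic _ _ fun j _ => monic_X_sub_C _)]
  rw [hdet, Matrix.det_apply]
  apply AddValuation.map_le_sum
  intro σ _
  have hsmul : IsDiscreteValuationRing.addVal R
      (Equiv.Perm.sign σ • ∏ i : Fin (n + 1),
        (Matrix.of fun i k : Fin (n + 1) =>
          (∏ j ∈ range (k : ℕ), (X - C (s j))).eval (x i)) (σ i) i)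
      = IsDiscreteValuationRing.addVal R (∏ i : Fin (n + 1),
        (Matrix.of fun i k : Fin (n + 1) =>
          (∏ j ∈ range (k : ℕ), (X - C (s j))).eval (x i)) (σ i) i) := by
    rcases Int.units_eq_one_or (Equiv.Perm.sign σ) with h | h <;> rw [h]
    · rw [one_smul]
    · rw [Units.smul_def]
      push_cast
      rw [neg_zsmul, one_zsmul]
      exact le_antisymm
        (IsDiscreteValuationRing.addVal_le_iff_dvd.mpr (neg_dvd.mpr dvd_rfl))
        (IsDiscreteValuationRing.addVal_le_iff_dvd.mpr (dvd_neg.mpr dvd_rfl))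
  rw [hsmul, addVal_finset_prod]
  rw [← Fin.sum_univ_eq_sum_range
    (fun k => IsDiscreteValuationRing.addVal R (∏ j ∈ range k, (s k - s j)))]
  apply Finset.sum_le_sum
  intro i _
  have : (Matrix.of fun i k : Fin (n + 1) =>
      (∏ j ∈ range (k : ℕ), (X - C (s j))).eval (x i)) (σ i) i
      = ∏ j ∈ range (i : ℕ), (x (σ i) - s j) := by
    simp [eval_prod]
  rw [this]
  exact hgreedy (i : ℕ) (x (σ i)) (hx (σ i))

/-- The valuation of the Vandermonde product of the first `n+1` terms of a sequence equals the
sum of the step valuations. -/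
private lemma bhargava_vandermonde_val (s : ℕ → R) (n : ℕ) :
    IsDiscreteValuationRing.addVal R
        (∏ i : Fin (n + 1), ∏ j ∈ Ioi i, (s (j : ℕ) - s (i : ℕ)))
      = ∑ k ∈ range (n + 1),
          IsDiscreteValuationRing.addVal R (∏ j ∈ range k, (s k - s j)) := by
  classical
  have hswap : (∏ i : Fin (n + 1), ∏ j ∈ Ioi i, (s (j : ℕ) - s (i : ℕ)))
      = ∏ j : Fin (n + 1), ∏ i ∈ Iio j, (s (j : ℕ) - s (i : ℕ)) :=
    Finset.prod_comm' (by simp [Finset.mem_Ioi, Finset.mem_Iio])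
  have hinner : ∀ j : Fin (n + 1),
      (∏ i ∈ Iio j, (s (j : ℕ) - s (i : ℕ))) = ∏ m ∈ range (j : ℕ), (s (j : ℕ) - s m) := by
    intro j
    refine Finset.prod_bij' (fun i _ => (i : ℕ))
      (fun m hm => ⟨m, Nat.lt_trans (Finset.mem_range.mp hm) j.isLt⟩) ?_ ?_ ?_ ?_ ?_
    · intro i hi
      simpa [Finset.mem_range] using (Finset.mem_Iio.mp hi)
    · intro m hm
      simpa [Finset.mem_Iio, Fin.lt_def] using (Finset.mem_range.mp hm)
    · intro i hi; simp
    · intro m hm; simp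
    · intro i hi; rfl
  rw [hswap]
  calc IsDiscreteValuationRing.addVal R (∏ j : Fin (n + 1), ∏ i ∈ Iio j, (s (j : ℕ) - s (i : ℕ)))
      = ∑ j : Fin (n + 1), IsDiscreteValuationRing.addVal R
          (∏ i ∈ Iio j, (s (j : ℕ) - s (i : ℕ))) := addVal_finset_prod _ _
    _ = ∑ j : Fin (n + 1), IsDiscreteValuationRing.addVal R
          (∏ m ∈ range (j : ℕ), (s (j : ℕ) - s m)) := by
        refine Finset.sum_congr rfl fun j _ => ?_
        rw [hinner j]
    _ = ∑ k ∈ range (n + 1),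
          IsDiscreteValuationRing.addVal R (∏ j ∈ range k, (s k - s j)) :=
        Fin.sum_univ_eq_sum_range
          (fun k => IsDiscreteValuationRing.addVal R (∏ j ∈ range k, (s k - s j))) (n + 1)

private lemma bhargava_ne_top (S : Set R) (hS : S.Infinite) (s : ℕ → R)
    (hgreedy : ∀ n, ∀ t ∈ S,
      IsDiscreteValuationRing.addVal R (∏ j ∈ Finset.range n, (s n - s j)) ≤
        IsDiscreteValuationRing.addVal R (∏ j ∈ Finset.range n, (t - s j)))
    (k : ℕ) :
    IsDiscreteValuationRing.addVal R (∏ j ∈ range k, (s k - s j)) ≠ ⊤ := by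
  classical
  obtain ⟨t, htS, ht⟩ := hS.exists_notMem_finset ((range k).image s)
  have h1 : (∏ j ∈ range k, (t - s j)) ≠ 0 := by
    refine Finset.prod_ne_zero_iff.mpr fun j hj => sub_ne_zero.mpr fun h => ht ?_
    rw [h]
    exact Finset.mem_image_of_mem s hj
  intro htop
  have hle := hgreedy k t htS
  rw [htop, top_le_iff] at hle
  exact h1 (IsDiscreteValuationRing.addVal_eq_top_iff.mp hle)

end BhargavaAux

/-- **Well-definedness of Bhargava's factorials for subsets of a local field's valuation
ring.** Let `R` be the valuation ring of a local field (a discrete valuation ring with finite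
residue field), with additive valuation `val = IsDiscreteValuationRing.addVal R`, and let `S` be
an infinite subset of `R`. A sequence `s : ℕ → S` is greedy if each `s n` minimizes
`val (Π_{j<n} (s − s j))` over `s ∈ S`. Then the value
`n!_S := val (Π_{j<n} (s n − s j))` does not depend on the greedy choices: any two greedy
sequences give the same value for every `n`. -/
theorem bhargava_factorial_well_defined
    (R : Type*) [CommRing R] [IsDomain R] [IsDiscreteValuationRing R]
    [Finite (IsLocalRing.ResidueField R)]
    (S : Set R) (hS : S.Infinite)
    (s s' : ℕ → R)
    (hs : ∀ n, s n ∈ S) (hs' : ∀ n, s' n ∈ S)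
    (hgreedy : ∀ n, ∀ t ∈ S,
      IsDiscreteValuationRing.addVal R (∏ j ∈ Finset.range n, (s n - s j)) ≤
        IsDiscreteValuationRing.addVal R (∏ j ∈ Finset.range n, (t - s j)))
    (hgreedy' : ∀ n, ∀ t ∈ S,
      IsDiscreteValuationRing.addVal R (∏ j ∈ Finset.range n, (s' n - s' j)) ≤
        IsDiscreteValuationRing.addVal R (∏ j ∈ Finset.range n, (t - s' j))) :
    ∀ n : ℕ,
      IsDiscreteValuationRing.addVal R (∏ j ∈ Finset.range n, (s n - s j)) =
        IsDiscreteValuationRing.addVal R (∏ j ∈ Finset.range n, (s' n - s' j)) := by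
  classical
  set α : ℕ → ℕ∞ :=
    fun k => IsDiscreteValuationRing.addVal R (∏ j ∈ Finset.range k, (s k - s j)) with hα
  set α' : ℕ → ℕ∞ :=
    fun k => IsDiscreteValuationRing.addVal R (∏ j ∈ Finset.range k, (s' k - s' j)) with hα'
  have hsum : ∀ n : ℕ, ∑ k ∈ Finset.range (n + 1), α k = ∑ k ∈ Finset.range (n + 1), α' k := by
    intro n
    apply le_antisymm
    · calc ∑ k ∈ Finset.range (n + 1), α k
          ≤ IsDiscreteValuationRing.addVal R
            (∏ i : Fin (n + 1), ∏ j ∈ Finset.Ioi i, (s' (j : ℕ) - s' (i : ℕ))) :=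
            bhargava_key S s hgreedy n (fun i => s' (i : ℕ)) (fun i => hs' _)
        _ = ∑ k ∈ Finset.range (n + 1), α' k := bhargava_vandermonde_val s' n
    · calc ∑ k ∈ Finset.range (n + 1), α' k
          ≤ IsDiscreteValuationRing.addVal R
            (∏ i : Fin (n + 1), ∏ j ∈ Finset.Ioi i, (s (j : ℕ) - s (i : ℕ))) :=
            bhargava_key S s' hgreedy' n (fun i => s (i : ℕ)) (fun i => hs _)
        _ = ∑ k ∈ Finset.range (n + 1), α k := bhargava_vandermonde_val s n
  intro n
  have h1 := hsum n
  have h2 : ∑ k ∈ Finset.range n, α k = ∑ k ∈ Finset.range n, α' k := by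
    cases n with
    | zero => simp
    | succ m => exact hsum m
  rw [Finset.sum_range_succ, Finset.sum_range_succ, h2] at h1
  have hfin : (∑ k ∈ Finset.range n, α' k) ≠ ⊤ :=
    WithTop.sum_ne_top.mpr fun k _ => bhargava_ne_top S hS s' hgreedy' k
  exact WithTop.add_left_cancel hfin h1
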